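/- Let T be a weighted tree on N ≥ 2 vertices (a connected graph whose positive-weight edges form no cycle), fix a root vertex r, and for each vertex i let depth(i) be the number of edges on the unique path from r to i. Then for any nonzero eigenvector v of the combinatorial graph Laplacian L associated with its largest eigenvalue λ_max, and for all vertices i, j: v(i)·v(j) > 0 if depth(i) and depth(j) have the same parity, and v(i)·v(j) < 0 if they have opposite parity. In particular, the set {i : v(i) ≥ 0} is exactly the set of vertices of even depth or exactly the set of vertices of odd depth. -/

import Mathlib

open Matrix

noncomputable def deg {n : Type*} [Fintype n] (W : Matrix n n ℝ) (i : n) : ℝ := ∑ j, W i j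

noncomputable def lap {n : Type*} [Fintype n] [DecidableEq n] (W : Matrix n n ℝ) :
    Matrix n n ℝ :=
  Matrix.diagonal (deg W) - W

def IsConn {n : Type*} (W : Matrix n n ℝ) : Prop :=
  ∀ i j : n, Relation.ReflTransGen (fun a b => 0 < W a b) i j

def IsBipartiteWith {n : Type*} (W : Matrix n n ℝ) (V1 : Set n) : Prop :=
  ∀ i j, 0 < W i j → (i ∈ V1 ↔ j ∉ V1)

open Classical in
noncomputable def sortedEigs {n : Type*} [Fintype n] [DecidableEq n] (A : Matrix n n ℝ) :
    Fin (Fintype.card n) → ℝ :=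
  if h : A.IsHermitian then
    (fun i => h.eigenvalues ((Fintype.equivFin n).symm i)) ∘
      ⇑(Tuple.sort fun i => h.eigenvalues ((Fintype.equivFin n).symm i))
  else 0

noncomputable def kron {n : Type*} [Fintype n] [DecidableEq n] (L : Matrix n n ℝ)
    (V1 : Finset n) : Matrix ↥V1 ↥V1 ℝ :=
  L.submatrix (Subtype.val : ↥V1 → n) (Subtype.val : ↥V1 → n) -
    L.submatrix (Subtype.val : ↥V1 → n) (Subtype.val : ↥(V1ᶜ) → n) *
      (L.submatrix (Subtype.val : ↥(V1ᶜ) → n) (Subtype.val : ↥(V1ᶜ) → n))⁻¹ *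
      L.submatrix (Subtype.val : ↥(V1ᶜ) → n) (Subtype.val : ↥V1 → n)

noncomputable def wred {m : Type*} [DecidableEq m] (K : Matrix m m ℝ) : Matrix m m ℝ :=
  Matrix.of fun i j => if i = j then 0 else -K i j

section TreeAux

variable {V : Type*} [DecidableEq V] {G : SimpleGraph V}

lemma tree_path_length_eq_dist (hT : G.IsTree) {a b : V} (p : G.Walk a b) (hp : p.IsPath) :
    p.length = G.dist a b := by
  obtain ⟨w0, hw0⟩ := (hT.isConnected a b).exists_walk_length_eq_dist
  have hbp : w0.bypass.IsPath := SimpleGraph.Walk.bypass_isPath w0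
  have h1 : G.dist a b ≤ w0.bypass.length := SimpleGraph.dist_le _
  have h2 : w0.bypass.length ≤ w0.length := SimpleGraph.Walk.length_bypass_le w0
  have hlen : w0.bypass.length = G.dist a b := le_antisymm (by omega) h1
  have hpu := (hT.existsUnique_path a b).unique hp hbp
  rw [hpu, hlen]

lemma tree_adj_dist (hT : G.IsTree) (r : V) {i j : V} (hadj : G.Adj i j) :
    G.dist r j = G.dist r i + 1 ∨ G.dist r i = G.dist r j + 1 := by
  obtain ⟨p, hp, -⟩ := hT.existsUnique_path r i
  have hpl : p.length = G.dist r i := tree_path_length_eq_dist hT p hp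
  by_cases hj : j ∈ p.support
  · right
    have h1 : (p.takeUntil j hj).IsPath := hp.takeUntil hj
    have h2 : (p.dropUntil j hj).IsPath := hp.dropUntil hj
    have he : (SimpleGraph.Walk.cons hadj.symm SimpleGraph.Walk.nil).IsPath := by
      rw [SimpleGraph.Walk.cons_isPath_iff]
      exact ⟨SimpleGraph.Walk.IsPath.nil, by simp [hadj.ne']⟩
    have h3 : p.dropUntil j hj = SimpleGraph.Walk.cons hadj.symm SimpleGraph.Walk.nil :=
      (hT.existsUnique_path j i).unique h2 he
    have hlen : (p.takeUntil j hj).length + (p.dropUntil j hj).length = p.length := by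
      rw [← SimpleGraph.Walk.length_append, p.take_spec hj]
    have l1 : (p.takeUntil j hj).length = G.dist r j := tree_path_length_eq_dist hT _ h1
    rw [h3] at hlen
    simp only [SimpleGraph.Walk.length_cons, SimpleGraph.Walk.length_nil] at hlen
    omega
  · left
    have hp' : ((SimpleGraph.Walk.cons hadj.symm p.reverse).reverse).IsPath := by
      apply SimpleGraph.Walk.IsPath.reverse
      rw [SimpleGraph.Walk.cons_isPath_iff]
      exact ⟨hp.reverse, by simpa [SimpleGraph.Walk.support_reverse] using hj⟩
    have hl : ((SimpleGraph.Walk.cons hadj.symm p.reverse).reverse).length = p.length + 1 := by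
      simp [SimpleGraph.Walk.length_reverse, SimpleGraph.Walk.length_cons]
    have := tree_path_length_eq_dist hT _ hp'
    omega

omit [DecidableEq V] in
lemma walk_prop {P : V → Prop} (h : ∀ a b, G.Adj a b → P a → P b) {a b : V}
    (p : G.Walk a b) (ha : P a) : P b := by
  induction p with
  | nil => exact ha
  | cons hadj q ih => exact ih (h _ _ hadj ha)

end TreeAux

section MatAux

variable {n : Type*} [Fintype n] [DecidableEq n]

lemma posSemidef_smul_one_sub {A : Matrix n n ℝ} (hA : A.IsHermitian) {lam : ℝ}
    (h : ∀ i, hA.eigenvalues i ≤ lam) : (lam • (1 : Matrix n n ℝ) - A).PosSemidef := by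
  set U := (hA.eigenvectorUnitary : Matrix n n ℝ) with hUdef
  have hU : U * star U = 1 := (Matrix.mem_unitaryGroup_iff).mp hA.eigenvectorUnitary.2
  have hdiag : Matrix.diagonal (fun i => lam - hA.eigenvalues i)
      = lam • (1 : Matrix n n ℝ) - Matrix.diagonal (RCLike.ofReal ∘ hA.eigenvalues) := by
    ext i j
    by_cases hij : i = j <;>
      simp [Matrix.diagonal_apply, Matrix.one_apply, hij]
  have key : U * Matrix.diagonal (fun i => lam - hA.eigenvalues i) * star U
      = lam • (1 : Matrix n n ℝ) - A := by
    rw [hdiag, Matrix.mul_sub, Matrix.sub_mul, Matrix.mul_smul, Matrix.mul_one,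
      Matrix.smul_mul, hU]
    exact congrArg (fun X => lam • (1 : Matrix n n ℝ) - X) hA.spectral_theorem.symm
  rw [← key, Matrix.star_eq_conjTranspose]
  exact (Matrix.posSemidef_diagonal_iff.mpr
    fun i => sub_nonneg.mpr (h i)).mul_mul_conjTranspose_same U

lemma lap_quad (W : Matrix n n ℝ) (x : n → ℝ) :
    x ⬝ᵥ (lap W *ᵥ x) = (∑ i, deg W i * (x i * x i)) - ∑ i, ∑ j, W i j * (x i * x j) := by
  unfold lap
  rw [Matrix.sub_mulVec, dotProduct_sub]
  congr 1
  · simp only [dotProduct, Matrix.mulVec_diagonal]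
    exact Finset.sum_congr rfl fun i _ => by ring
  · simp only [dotProduct, Matrix.mulVec, Finset.mul_sum]
    exact Finset.sum_congr rfl fun i _ => Finset.sum_congr rfl fun j _ => by ring

end MatAux

/-- For a weighted tree on `N ≥ 2` vertices rooted at `r`, any nonzero eigenvector `v`
of the Laplacian for the largest eigenvalue satisfies `v i * v j > 0` when the depths
of `i` and `j` have the same parity and `v i * v j < 0` otherwise; in particular
`{i : v i ≥ 0}` is exactly the even-depth vertices or exactly the odd-depth vertices. -/
theorem largest_laplacian_eigenvector_polarity_of_tree
    {N : ℕ} (hN : 2 ≤ N) (W : Matrix (Fin N) (Fin N) ℝ)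
    (hsymm : W.IsSymm) (hnonneg : ∀ i j, 0 ≤ W i j) (hdiag : ∀ i, W i i = 0)
    (htree : (SimpleGraph.fromRel fun a b => 0 < W a b).IsTree)
    (r : Fin N) (v : Fin N → ℝ) (hv : v ≠ 0)
    (heig : lap W *ᵥ v =
      sortedEigs (lap W) ⟨N - 1, by simp only [Fintype.card_fin]; omega⟩ • v) :
    (∀ i j, (SimpleGraph.fromRel fun a b => 0 < W a b).dist r i % 2 =
        (SimpleGraph.fromRel fun a b => 0 < W a b).dist r j % 2 → 0 < v i * v j) ∧
    (∀ i j, (SimpleGraph.fromRel fun a b => 0 < W a b).dist r i % 2 ≠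
        (SimpleGraph.fromRel fun a b => 0 < W a b).dist r j % 2 → v i * v j < 0) ∧
    ({i | 0 ≤ v i} = {i | Even ((SimpleGraph.fromRel fun a b => 0 < W a b).dist r i)} ∨
      {i | 0 ≤ v i} = {i | Odd ((SimpleGraph.fromRel fun a b => 0 < W a b).dist r i)}) := by
  classical
  set G := SimpleGraph.fromRel fun a b : Fin N => 0 < W a b with hG
  have hLsymm : (lap W).IsSymm := (Matrix.isSymm_diagonal _).sub hsymm
  have hL : (lap W).IsHermitian := by
    rw [Matrix.IsHermitian, Matrix.conjTranspose_eq_transpose_of_trivial]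
    exact hLsymm
  -- the top sorted eigenvalue dominates all eigenvalues
  have hmax : ∀ k : Fin N, hL.eigenvalues k ≤
      sortedEigs (lap W) ⟨N - 1, by simp only [Fintype.card_fin]; omega⟩ := by
    intro k
    have hrw : sortedEigs (lap W)
        = (fun i => hL.eigenvalues ((Fintype.equivFin (Fin N)).symm i)) ∘
          ⇑(Tuple.sort fun i => hL.eigenvalues ((Fintype.equivFin (Fin N)).symm i)) := by
      unfold sortedEigs
      rw [dif_pos hL]
    rw [hrw]
    set g : Fin (Fintype.card (Fin N)) → ℝ :=
      fun i => hL.eigenvalues ((Fintype.equivFin (Fin N)).symm i) with hg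
    set m : Fin (Fintype.card (Fin N)) :=
      (Tuple.sort g).symm ((Fintype.equivFin (Fin N)) k) with hm
    have h1 : (g ∘ ⇑(Tuple.sort g)) m = hL.eigenvalues k := by
      simp [hm, hg]
    have h2 : m ≤ (⟨N - 1, by simp only [Fintype.card_fin]; omega⟩ :
        Fin (Fintype.card (Fin N))) := by
      have hmlt := m.2
      rw [Fin.le_def]
      simp only [Fintype.card_fin] at hmlt ⊢
      omega
    calc hL.eigenvalues k = (g ∘ ⇑(Tuple.sort g)) m := h1.symm
      _ ≤ _ := Tuple.monotone_sort g h2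
  set lam := sortedEigs (lap W) ⟨N - 1, by simp only [Fintype.card_fin]; omega⟩ with hlamdef
  have heig' : lap W *ᵥ v = lam • v := heig
  have hmax' : ∀ k : Fin N, hL.eigenvalues k ≤ lam := fun k => hmax k
  have hps : (lam • (1 : Matrix (Fin N) (Fin N) ℝ) - lap W).PosSemidef :=
    posSemidef_smul_one_sub hL hmax'
  -- adjacency in terms of W
  have hWsymm : ∀ a b, W b a = W a b := by
    intro a b
    have h := congrFun (congrFun hsymm a) b
    simpa [Matrix.transpose_apply] using h
  have hadj : ∀ a b, G.Adj a b ↔ 0 < W a b := by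
    intro a b
    rw [hG, SimpleGraph.fromRel_adj]
    constructor
    · rintro ⟨hne, h | h⟩
      · exact h
      · rwa [hWsymm a b] at h
    · intro h
      refine ⟨fun he => ?_, Or.inl h⟩
      subst he
      rw [hdiag a] at h
      exact lt_irrefl _ h
  have hedge : ∀ a b, 0 < W a b →
      (G.dist r b = G.dist r a + 1 ∨ G.dist r a = G.dist r b + 1) :=
    fun a b h => tree_adj_dist htree r ((hadj a b).mpr h)
  set c : Fin N → ℝ := fun i => (-1 : ℝ) ^ (G.dist r i) with hc
  have hcc : ∀ i, c i * c i = 1 := by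
    intro i
    simp only [hc]
    rw [← pow_add]
    exact Even.neg_one_pow ⟨G.dist r i, rfl⟩
  have hcne : ∀ i, c i ≠ 0 := fun i h => by simpa [h] using hcc i
  have hec : ∀ a b, 0 < W a b → c b = - c a := by
    intro a b h
    rcases hedge a b h with h1 | h1
    · simp only [hc]
      rw [h1, pow_succ]
      ring
    · simp only [hc]
      rw [h1, pow_succ]
      ring
  set w : Fin N → ℝ := fun i => c i * |v i| with hw
  have hww : ∀ i, w i * w i = v i * v i := by
    intro i
    simp only [hw]
    calc (c i * |v i|) * (c i * |v i|) = (c i * c i) * (|v i| * |v i|) := by ring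
      _ = v i * v i := by rw [hcc i, one_mul, abs_mul_abs_self]
  have hwneg : ∀ i j, 0 < W i j → w i * w j = -|v i * v j| := by
    intro i j h
    simp only [hw]
    rw [hec i j h, abs_mul]
    linear_combination (-(|v i| * |v j|)) * hcc i
  have hto : ∀ i j, W i j * (w i * w j) ≤ W i j * (v i * v j) := by
    intro i j
    rcases (hnonneg i j).eq_or_lt with h | h
    · rw [← h, zero_mul, zero_mul]
    · refine mul_le_mul_of_nonneg_left ?_ h.le
      rw [hwneg i j h]
      exact neg_abs_le _
  have hqv : v ⬝ᵥ (lap W *ᵥ v) = lam * (v ⬝ᵥ v) := by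
    rw [heig', dotProduct_smul, smul_eq_mul]
  have hwwdot : w ⬝ᵥ w = v ⬝ᵥ v := Finset.sum_congr rfl fun i _ => hww i
  have hsum_le : ∀ i : Fin N, (∑ j, W i j * (w i * w j)) ≤ ∑ j, W i j * (v i * v j) :=
    fun i => Finset.sum_le_sum fun j _ => hto i j
  have hdegeq : (∑ i, deg W i * (w i * w i)) = ∑ i, deg W i * (v i * v i) :=
    Finset.sum_congr rfl fun i _ => by rw [hww i]
  have hqw_ge : v ⬝ᵥ (lap W *ᵥ v) ≤ w ⬝ᵥ (lap W *ᵥ w) := by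
    rw [lap_quad, lap_quad]
    have h2 : (∑ i, ∑ j, W i j * (w i * w j)) ≤ ∑ i, ∑ j, W i j * (v i * v j) :=
      Finset.sum_le_sum fun i _ => hsum_le i
    linarith
  have hstar : star w = w := by
    ext i
    simp
  have hqw_le : w ⬝ᵥ (lap W *ᵥ w) ≤ lam * (w ⬝ᵥ w) := by
    have h0 := hps.dotProduct_mulVec_nonneg w
    rw [hstar, Matrix.sub_mulVec, Matrix.smul_mulVec, Matrix.one_mulVec,
      dotProduct_sub, dotProduct_smul, smul_eq_mul] at h0
    linarith
  have hqeq : w ⬝ᵥ (lap W *ᵥ w) = lam * (w ⬝ᵥ w) := by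
    apply le_antisymm hqw_le
    rw [hwwdot, ← hqv]
    exact hqw_ge
  have hLw : lap W *ᵥ w = lam • w := by
    have h0 : star w ⬝ᵥ ((lam • (1 : Matrix (Fin N) (Fin N) ℝ) - lap W) *ᵥ w) = 0 := by
      rw [hstar, Matrix.sub_mulVec, Matrix.smul_mulVec, Matrix.one_mulVec,
        dotProduct_sub, dotProduct_smul, smul_eq_mul, hqeq, sub_self]
    have h1 := (hps.dotProduct_mulVec_zero_iff w).mp h0
    rw [Matrix.sub_mulVec, Matrix.smul_mulVec, Matrix.one_mulVec, sub_eq_zero] at h1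
    exact h1.symm
  have hsum_eq : (∑ i, ∑ j, W i j * (w i * w j)) = ∑ i, ∑ j, W i j * (v i * v j) := by
    have e1 := lap_quad W w
    have e2 := lap_quad W v
    have h3 : w ⬝ᵥ (lap W *ᵥ w) = v ⬝ᵥ (lap W *ᵥ v) := by rw [hqeq, hwwdot, hqv]
    linarith
  have hterm : ∀ i j, W i j * (w i * w j) = W i j * (v i * v j) := by
    have houter := (Finset.sum_eq_sum_iff_of_le fun i _ => hsum_le i).mp hsum_eq
    intro i j
    exact (Finset.sum_eq_sum_iff_of_le fun j _ => hto i j).mp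
      (houter i (Finset.mem_univ i)) j (Finset.mem_univ j)
  have hedge_nonpos : ∀ i j, 0 < W i j → v i * v j ≤ 0 := by
    intro i j h
    have h2 : w i * w j = v i * v j := mul_left_cancel₀ h.ne' (hterm i j)
    rw [← h2, hwneg i j h]
    exact neg_nonpos.mpr (abs_nonneg _)
  have hconn := htree.isConnected
  -- v vanishes nowhere
  have hvne : ∀ i, v i ≠ 0 := by
    by_contra hcon
    push_neg at hcon
    obtain ⟨i0, hi0⟩ := hcon
    have hstep : ∀ a b, G.Adj a b → v a = 0 → v b = 0 := by
      intro a b hab hva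
      have hWab := (hadj a b).mp hab
      have hwa : w a = 0 := by
        simp only [hw]
        rw [hva, abs_zero, mul_zero]
      have hcomp := congrFun hLw a
      rw [Pi.smul_apply, smul_eq_mul] at hcomp
      have hl : (lap W *ᵥ w) a = deg W a * w a - ∑ j, W a j * w j := by
        unfold lap
        rw [Matrix.sub_mulVec]
        have hd1 : (Matrix.diagonal (deg W) *ᵥ w) a = deg W a * w a :=
          Matrix.mulVec_diagonal _ _ _
        rw [Pi.sub_apply, hd1]
        rfl
      rw [hl, hwa, mul_zero, mul_zero, zero_sub, neg_eq_zero] at hcomp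
      have hterm2 : ∀ j, W a j * w j = (- c a) * (W a j * |v j|) := by
        intro j
        rcases (hnonneg a j).eq_or_lt with h | h
        · rw [← h]
          ring
        · simp only [hw]
          rw [hec a j h]
          ring
      have hsz2 : ∑ j, W a j * |v j| = 0 := by
        rw [Finset.sum_congr rfl fun j _ => hterm2 j, ← Finset.mul_sum] at hcomp
        rcases mul_eq_zero.mp hcomp with h | h
        · exact absurd (neg_eq_zero.mp h) (hcne a)
        · exact h
      have hzb := (Finset.sum_eq_zero_iff_of_nonneg
        fun j _ => mul_nonneg (hnonneg a j) (abs_nonneg (v j))).mp hsz2 b (Finset.mem_univ b)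
      rcases mul_eq_zero.mp hzb with h | h
      · exact absurd h hWab.ne'
      · exact abs_eq_zero.mp h
    have hall : ∀ j, v j = 0 := fun j => (hconn i0 j).elim fun p => walk_prop hstep p hi0
    exact hv (funext hall)
  have hr2 : 0 < v r * v r := mul_self_pos.mpr (hvne r)
  -- sign propagation along the tree
  have hsign : ∀ i, 0 < v r * v i * c i := by
    intro i
    refine (hconn r i).elim fun p => walk_prop (P := fun i => 0 < v r * v i * c i) ?_ p ?_
    · intro a b hab ha
      have hWab := (hadj a b).mp hab
      have hvab : v a * v b < 0 :=
        lt_of_le_of_ne (hedge_nonpos a b hWab) (mul_ne_zero (hvne a) (hvne b))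
      rw [hec a b hWab]
      have hp2 : (v r * v a * c a) * (v a * v b) < 0 := mul_neg_of_pos_of_neg ha hvab
      nlinarith [hp2, sq_nonneg (v a)]
    · show 0 < v r * v r * c r
      have h1 : c r = 1 := by
        simp only [hc]
        rw [SimpleGraph.dist_self, pow_zero]
      rw [h1, mul_one]
      exact hr2
  have hG1 : ∀ i j, G.dist r i % 2 = G.dist r j % 2 → 0 < v i * v j := by
    intro i j hpar
    have hprod := mul_pos (hsign i) (hsign j)
    have hcij : c i * c j = 1 := by
      simp only [hc]
      rw [← pow_add]
      apply Even.neg_one_pow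
      rw [Nat.even_iff]
      omega
    have h3 : (v r * v i * c i) * (v r * v j * c j)
        = ((v r * v r) * (v i * v j)) * (c i * c j) := by ring
    rw [h3, hcij, mul_one] at hprod
    nlinarith [hprod, hr2]
  have hG2 : ∀ i j, G.dist r i % 2 ≠ G.dist r j % 2 → v i * v j < 0 := by
    intro i j hpar
    have hprod := mul_pos (hsign i) (hsign j)
    have hcij : c i * c j = -1 := by
      simp only [hc]
      rw [← pow_add]
      apply Odd.neg_one_pow
      rw [Nat.odd_iff]
      have h1 := Nat.mod_two_eq_zero_or_one (G.dist r i)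
      have h2 := Nat.mod_two_eq_zero_or_one (G.dist r j)
      omega
    have h3 : (v r * v i * c i) * (v r * v j * c j)
        = ((v r * v r) * (v i * v j)) * (c i * c j) := by ring
    rw [h3, hcij] at hprod
    nlinarith [hprod, hr2]
  refine ⟨hG1, hG2, ?_⟩
  have hdr : G.dist r r = 0 := SimpleGraph.dist_self
  rcases (hvne r).lt_or_gt with hneg | hpos
  · right
    ext i
    simp only [Set.mem_setOf_eq]
    constructor
    · intro hvi
      rw [Nat.odd_iff]
      by_contra hodd
      have h1 : G.dist r i % 2 = G.dist r r % 2 := by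
        have := Nat.mod_two_eq_zero_or_one (G.dist r i)
        omega
      have := hG1 i r h1
      nlinarith [mul_nonneg hvi (le_of_lt (neg_pos.mpr hneg))]
    · intro hodd
      have h1 : G.dist r i % 2 ≠ G.dist r r % 2 := by
        rw [Nat.odd_iff] at hodd
        omega
      have := hG2 i r h1
      nlinarith
  · left
    ext i
    simp only [Set.mem_setOf_eq]
    constructor
    · intro hvi
      rw [Nat.even_iff]
      by_contra heven
      have h1 : G.dist r i % 2 ≠ G.dist r r % 2 := by
        have := Nat.mod_two_eq_zero_or_one (G.dist r i)
        omega
      have := hG2 i r h1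
      nlinarith
    · intro heven
      have h1 : G.dist r i % 2 = G.dist r r % 2 := by
        rw [Nat.even_iff] at heven
        omega
      have := hG1 i r h1
      nlinarith
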